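/- Let S be a subset of a projective set in general position on S², with S not contained in a great circle, and let f be a symmetry of S with f(p) = p and f(q) = q for distinct, non-antipodal points p, q ∈ S. Then f is the identity on S. -/

import Mathlib

open scoped RealInnerProductSpace

noncomputable section

abbrev E3 := EuclideanSpace ℝ (Fin 3)

/-- Determinant of the 3×3 matrix whose rows are `p`, `q`, `r`. -/
def det3 (p q r : E3) : ℝ := Matrix.det (Matrix.of ![fun i => p i, fun i => q i, fun i => r i])

/-- The orientation `sgn(p,q,r)` of a triple of points: the sign of `det3 p q r`. -/
def sgn3 (p q r : E3) : ℝ := Real.sign (det3 p q r)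

/-- A projective set: a finite, antipodally symmetric subset of the unit sphere. -/
def IsProjectiveSet (P : Set E3) : Prop :=
  P.Finite ∧ P ⊆ Metric.sphere (0 : E3) 1 ∧ ∀ p ∈ P, -p ∈ P

/-- General position for a projective set: whenever three of its points are coplanar with
the origin, two of them are antipodal. -/
def ProjGenPos (P : Set E3) : Prop :=
  ∀ p ∈ P, ∀ q ∈ P, ∀ r ∈ P, p ≠ q → p ≠ r → q ≠ r → det3 p q r = 0 →
    (p = -q ∨ p = -r ∨ q = -r)

lemma det3_expand (p q r : E3) : det3 p q r =
    p 0*q 1*r 2 - p 0*q 2*r 1 - p 1*q 0*r 2 + p 1*q 2*r 0 + p 2*q 0*r 1 - p 2*q 1*r 0 := by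
  simp [det3, Matrix.det_fin_three]

lemma e3_neg_apply (v : E3) (i : Fin 3) : (-v) i = -(v i) := rfl

lemma pluecker (a b x y z : E3) :
    det3 a x z * det3 a b y = det3 a x y * det3 a b z + det3 a y z * det3 a b x := by
  simp only [det3_expand]; ring

lemma det3_aba (a b : E3) : det3 a b a = 0 := by simp only [det3_expand]; ring

lemma det3_abb (a b : E3) : det3 a b b = 0 := by simp only [det3_expand]; ring

lemma det3_neg₃ (a b v : E3) : det3 a b (-v) = - det3 a b v := by
  simp only [det3_expand, e3_neg_apply]; ring

lemma det3_neg₁ (a b v : E3) : det3 (-a) b v = - det3 a b v := by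
  simp only [det3_expand, e3_neg_apply]; ring

lemma det3_cyc (a b c : E3) : det3 b c a = det3 a b c := by
  simp only [det3_expand]; ring

lemma det3_swap₂₃ (a b c : E3) : det3 a c b = - det3 a b c := by
  simp only [det3_expand]; ring

lemma det3_nab_ab (a b : E3) : det3 (-a) b a = 0 := by
  simp only [det3_expand, e3_neg_apply]; ring

lemma det3_axx (a x : E3) : det3 a x x = 0 := by
  simp only [det3_expand]; ring

lemma pos_iff_of_sign_eq {d e : ℝ} (h : Real.sign d = Real.sign e) : 0 < d ↔ 0 < e := by
  rcases lt_trichotomy d 0 with hd|hd|hd <;> rcases lt_trichotomy e 0 with he|he|he <;>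
    constructor <;> intro h' <;>
    simp_all [Real.sign_of_pos, Real.sign_of_neg, Real.sign_zero] <;> linarith

lemma fix_of_order {α : Type*} [DecidableEq α] (T : Finset α) (g : α → α) (R : α → α → Prop)
    (hmap : ∀ x ∈ T, g x ∈ T)
    (hsurj : ∀ y ∈ T, ∃ x ∈ T, g x = y)
    (hinj : ∀ x ∈ T, ∀ y ∈ T, g x = g y → x = y)
    (hpresR : ∀ x ∈ T, ∀ y ∈ T, (R x y ↔ R (g x) (g y)))
    (htrans : ∀ x ∈ T, ∀ y ∈ T, ∀ z ∈ T, R x y → R y z → R x z)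
    (htri : ∀ x ∈ T, ∀ y ∈ T, x ≠ y → R x y ∨ R y x)
    (hirr : ∀ x ∈ T, ¬ R x x) :
    ∀ x ∈ T, g x = x := by
  classical
  set rank : α → ℕ := fun x => (T.filter (fun y => R y x)).card with hrank
  have hrank_g : ∀ x ∈ T, rank (g x) = rank x := by
    intro x hx
    have himg : T.filter (fun y => R y (g x)) = (T.filter (fun y => R y x)).image g := by
      ext z
      simp only [Finset.mem_filter, Finset.mem_image]
      constructor
      · rintro ⟨hz, hRz⟩
        obtain ⟨w, hw, rfl⟩ := hsurj z hz
        exact ⟨w, ⟨hw, (hpresR w hw x hx).2 hRz⟩, rfl⟩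
      · rintro ⟨w, ⟨hw, hRw⟩, rfl⟩
        exact ⟨hmap w hw, (hpresR w hw x hx).1 hRw⟩
    have hcard : (T.filter (fun y => R y x)).card = ((T.filter (fun y => R y x)).image g).card := by
      rw [Finset.card_image_of_injOn]
      intro u hu v hv huv
      simp only [Finset.coe_filter, Set.mem_setOf_eq] at hu hv
      exact hinj u hu.1 v hv.1 huv
    simp only [hrank, himg, ← hcard]
  have hrank_inj : ∀ x ∈ T, ∀ y ∈ T, rank x = rank y → x = y := by
    intro x hx y hy hxy
    by_contra hne
    have key : ∀ u v, u ∈ T → v ∈ T → R u v → rank u < rank v := by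
      intro u v hu hv hR
      apply Finset.card_lt_card
      have hsub : T.filter (fun y => R y u) ⊆ T.filter (fun y => R y v) := by
        intro z hz
        rw [Finset.mem_filter] at hz ⊢
        exact ⟨hz.1, htrans z hz.1 u hu v hv hz.2 hR⟩
      rw [Finset.ssubset_iff_of_subset hsub]
      exact ⟨u, Finset.mem_filter.2 ⟨hu, hR⟩, by simp [Finset.mem_filter, hirr u hu]⟩
    rcases htri x hx y hy hne with h | h
    · exact absurd hxy (Nat.ne_of_lt (key x y hx hy h))
    · exact absurd hxy.symm (Nat.ne_of_lt (key y x hy hx h))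
  intro x hx
  exact hrank_inj (g x) (hmap x hx) x hx (hrank_g x hx)

/-- Key lemma, positive side: if `f` fixes `a` and `b`, it fixes every point of `S`
strictly on the positive side of the plane through `0, a, b`. -/
lemma key_pos (P : Set E3) (hP : IsProjectiveSet P) (hgpP : ProjGenPos P)
    (S : Set E3) (hSP : S ⊆ P)
    (f : E3 → E3) (hbij : Set.BijOn f S S)
    (hpres : ∀ p ∈ S, ∀ q ∈ S, ∀ r ∈ S, sgn3 (f p) (f q) (f r) = sgn3 p q r)
    (a b : E3) (ha : a ∈ S) (hb : b ∈ S) (hfa : f a = a) (hfb : f b = b) :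
    ∀ x ∈ S, 0 < det3 a b x → f x = x := by
  classical
  have hfin : S.Finite := hP.1.subset hSP
  set T : Finset E3 := hfin.toFinset.filter (fun y => 0 < det3 a b y) with hTdef
  have hmemT : ∀ y, y ∈ T ↔ y ∈ S ∧ 0 < det3 a b y := by
    intro y; simp [hTdef, Set.Finite.mem_toFinset]
  -- sign preservation specialized
  have hab : ∀ u ∈ S, (0 < det3 a b u ↔ 0 < det3 a b (f u)) := by
    intro u hu
    have h := hpres a ha b hb u hu
    rw [hfa, hfb] at h
    simp only [sgn3] at h
    exact (pos_iff_of_sign_eq h).symm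
  have hauv : ∀ u ∈ S, ∀ v ∈ S, (0 < det3 a u v ↔ 0 < det3 a (f u) (f v)) := by
    intro u hu v hv
    have h := hpres a ha u hu v hv
    rw [hfa] at h
    simp only [sgn3] at h
    exact (pos_iff_of_sign_eq h).symm
  -- nondegeneracy within T
  have hne_a : ∀ u ∈ T, u ≠ a := by
    intro u hu hua
    rw [hmemT] at hu
    rw [hua, det3_aba] at hu
    exact lt_irrefl 0 hu.2
  have htri : ∀ u ∈ T, ∀ v ∈ T, u ≠ v → (0 < det3 a u v ∨ 0 < det3 a v u) := by
    intro u hu v hv huv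
    rw [hmemT] at hu hv
    have hd : det3 a u v ≠ 0 := by
      intro h0
      have hau : a ≠ u := fun h => (by rw [← h, det3_aba] at hu; exact lt_irrefl 0 hu.2)
      have hav : a ≠ v := fun h => (by rw [← h, det3_aba] at hv; exact lt_irrefl 0 hv.2)
      rcases hgpP a (hSP ha) u (hSP hu.1) v (hSP hv.1) hau hav huv h0 with h|h|h
      · -- a = -u
        have : det3 a b u = 0 := by rw [h]; exact det3_nab_ab u b
        rw [this] at hu; exact lt_irrefl 0 hu.2
      · have : det3 a b v = 0 := by rw [h]; exact det3_nab_ab v b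
        rw [this] at hv; exact lt_irrefl 0 hv.2
      · -- u = -v
        rw [h, det3_neg₃] at hu
        linarith [hu.2, hv.2]
    rcases lt_or_gt_of_ne hd with h|h
    · right
      rw [det3_swap₂₃]; linarith
    · left; exact h
  have hmap : ∀ u ∈ T, f u ∈ T := by
    intro u hu
    rw [hmemT] at hu ⊢
    exact ⟨hbij.mapsTo hu.1, (hab u hu.1).1 hu.2⟩
  have hsurj : ∀ v ∈ T, ∃ u ∈ T, f u = v := by
    intro v hv
    rw [hmemT] at hv
    obtain ⟨u, hu, hfu⟩ := hbij.surjOn hv.1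
    refine ⟨u, ?_, hfu⟩
    rw [hmemT]
    refine ⟨hu, ?_⟩
    rw [hab u hu, hfu]
    exact hv.2
  have hinj : ∀ u ∈ T, ∀ v ∈ T, f u = f v → u = v := by
    intro u hu v hv h
    exact hbij.injOn ((hmemT u).1 hu).1 ((hmemT v).1 hv).1 h
  have hpresR : ∀ u ∈ T, ∀ v ∈ T, (0 < det3 a u v ↔ 0 < det3 a (f u) (f v)) := by
    intro u hu v hv
    exact hauv u ((hmemT u).1 hu).1 v ((hmemT v).1 hv).1
  have htrans : ∀ u ∈ T, ∀ v ∈ T, ∀ w ∈ T, 0 < det3 a u v → 0 < det3 a v w → 0 < det3 a u w := by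
    intro u hu v hv w hw h1 h2
    rw [hmemT] at hu hv hw
    have hid := pluecker a b u v w
    nlinarith [hu.2, hv.2, hw.2, mul_pos h1 hw.2, mul_pos h2 hu.2]
  have hirr : ∀ u ∈ T, ¬ (0 < det3 a u u) := by
    intro u hu
    rw [det3_axx]
    exact lt_irrefl 0
  intro x hx hdx
  exact fix_of_order T f (fun u v => 0 < det3 a u v) hmap hsurj hinj hpresR htrans htri hirr
    x ((hmemT x).2 ⟨hx, hdx⟩)

/-- Key lemma: `f` fixes every point of `S` not coplanar with `0, a, b`. -/
lemma key_lemma (P : Set E3) (hP : IsProjectiveSet P) (hgpP : ProjGenPos P)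
    (S : Set E3) (hSP : S ⊆ P)
    (f : E3 → E3) (hbij : Set.BijOn f S S)
    (hpres : ∀ p ∈ S, ∀ q ∈ S, ∀ r ∈ S, sgn3 (f p) (f q) (f r) = sgn3 p q r)
    (a b : E3) (ha : a ∈ S) (hb : b ∈ S) (hfa : f a = a) (hfb : f b = b) :
    ∀ x ∈ S, det3 a b x ≠ 0 → f x = x := by
  intro x hx hdx
  rcases lt_or_gt_of_ne hdx with h|h
  · -- use the pair (b, a): det3 b a x = - det3 a b x > 0
    have h' : 0 < det3 b a x := by
      have hba : det3 b a x = - det3 a b x := by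
        simp only [det3_expand]; ring
      rw [hba]; linarith
    exact key_pos P hP hgpP S hSP f hbij hpres b a hb ha hfb hfa x hx h'
  · exact key_pos P hP hgpP S hSP f hbij hpres a b ha hb hfa hfb x hx h

theorem stmt8 (P : Set E3) (hP : IsProjectiveSet P) (hgpP : ProjGenPos P)
    (S : Set E3) (hSP : S ⊆ P)
    (hngc : ¬ ∃ v : E3, v ≠ 0 ∧ ∀ p ∈ S, ⟪v, p⟫ = (0 : ℝ))
    (f : E3 → E3) (hbij : Set.BijOn f S S)
    (hpres : ∀ p ∈ S, ∀ q ∈ S, ∀ r ∈ S, sgn3 (f p) (f q) (f r) = sgn3 p q r)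
    (p q : E3) (hp : p ∈ S) (hq : q ∈ S) (hpq : p ≠ q) (hpnq : p ≠ -q)
    (hfp : f p = p) (hfq : f q = q) :
    Set.EqOn f id S := by
  -- norms
  have hnorm : ∀ x ∈ S, x 0 * x 0 + x 1 * x 1 + x 2 * x 2 = 1 := by
    intro x hx
    have hx1 : x ∈ Metric.sphere (0 : E3) 1 := hP.2.1 (hSP hx)
    have hxn : ‖x‖ = 1 := by simpa using hx1
    have : ⟪x, x⟫ = (1 : ℝ) := by
      rw [real_inner_self_eq_norm_mul_norm, hxn]; norm_num
    rw [PiLp.inner_apply] at this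
    simp [Fin.sum_univ_three, RCLike.inner_apply, conj_trivial] at this
    linear_combination this
  -- find r with det3 p q r ≠ 0
  have hex : ∃ r ∈ S, det3 p q r ≠ 0 := by
    by_contra hall
    push_neg at hall
    apply hngc
    refine ⟨WithLp.toLp 2 ![p 1 * q 2 - p 2 * q 1, p 2 * q 0 - p 0 * q 2, p 0 * q 1 - p 1 * q 0], ?_, ?_⟩
    · -- v ≠ 0
      intro h0
      have h0' : ∀ i : Fin 3, (WithLp.toLp 2 ![p 1 * q 2 - p 2 * q 1, p 2 * q 0 - p 0 * q 2,
          p 0 * q 1 - p 1 * q 0] : E3) i = 0 := fun i => by rw [h0]; simp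
      have m0 : p 1 * q 2 - p 2 * q 1 = 0 := by simpa using h0' 0
      have m1 : p 2 * q 0 - p 0 * q 2 = 0 := by simpa using h0' 1
      have m2 : p 0 * q 1 - p 1 * q 0 = 0 := by simpa using h0' 2
      have hpp := hnorm p hp
      have hqq := hnorm q hq
      set c : ℝ := p 0 * q 0 + p 1 * q 1 + p 2 * q 2 with hc
      have hq0 : q 0 = c * p 0 := by linear_combination (-(q 0)) * hpp - p 1 * m2 + p 2 * m1 - p 0 * hc
      have hq1 : q 1 = c * p 1 := by linear_combination (-(q 1)) * hpp + p 0 * m2 - p 2 * m0 - p 1 * hc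
      have hq2 : q 2 = c * p 2 := by linear_combination (-(q 2)) * hpp - p 0 * m1 + p 1 * m0 - p 2 * hc
      have hc2 : c * c = 1 := by
        have : c * c * (p 0 * p 0 + p 1 * p 1 + p 2 * p 2) = 1 := by
          rw [← hqq, hq0, hq1, hq2]; ring
        rw [hpp] at this; linarith
      have hqcp : q = c • p := by
        ext i
        fin_cases i
        · simpa using hq0
        · simpa using hq1
        · simpa using hq2
      rcases mul_self_eq_one_iff.1 hc2 with h1 | h1
      · rw [h1, one_smul] at hqcp
        exact hpq hqcp.symm
      · apply hpnq
        rw [hqcp, h1]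
        ext i
        simp
    · intro s hs
      have := hall s hs
      rw [det3_expand] at this
      rw [PiLp.inner_apply]
      simp only [RCLike.inner_apply, conj_trivial, Fin.sum_univ_three, PiLp.toLp_apply]
      simp only [Matrix.cons_val_zero, Matrix.cons_val_one, Matrix.head_cons,
        Matrix.cons_val_two, Matrix.tail_cons]
      linarith [this]
  obtain ⟨r, hr, hdr⟩ := hex
  have hfr : f r = r :=
    key_lemma P hP hgpP S hSP f hbij hpres p q hp hq hfp hfq r hr hdr
  intro x hx
  show f x = x
  by_cases hdx : det3 p q x ≠ 0
  · exact key_lemma P hP hgpP S hSP f hbij hpres p q hp hq hfp hfq x hx hdx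
  push_neg at hdx
  by_cases hxp : x = p
  · rw [hxp]; exact hfp
  by_cases hxq : x = q
  · rw [hxq]; exact hfq
  have hgen := hgpP p (hSP hp) q (hSP hq) x (hSP hx) hpq (Ne.symm hxp) (Ne.symm hxq) hdx
  rcases hgen with h | h | h
  · exact absurd h hpnq
  · -- p = -x, i.e. x = -p; use pair (q, r)
    have hxnp : x = -p := by rw [h]; simp
    have hd : det3 q r x ≠ 0 := by
      rw [hxnp, det3_neg₃]
      intro h0
      apply hdr
      have : det3 q r p = 0 := by linarith
      rw [← det3_cyc]; exact this
    exact key_lemma P hP hgpP S hSP f hbij hpres q r hq hr hfq hfr x hx hd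
  · -- q = -x, i.e. x = -q; use pair (p, r)
    have hxnq : x = -q := by rw [h]; simp
    have hd : det3 p r x ≠ 0 := by
      rw [hxnq, det3_neg₃]
      intro h0
      apply hdr
      have h1 : det3 p r q = 0 := by linarith
      have h2 : det3 p q r = - det3 p r q := by rw [det3_swap₂₃]
      rw [h2, h1]; ring
    exact key_lemma P hP hgpP S hSP f hbij hpres p r hp hr hfp hfr x hx hd
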